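/- arXiv:2203.08336 — 5 statements merged into one kernel-verified Lean document; each statement's English description precedes it below -/
import Mathlib

section
/- Let M be a compact metric space, f : M → M a homeomorphism, and let ℱ = {Y₁, …, Y_L} be a finite family of pairwise disjoint subsets of M each of which is wandering (f^n(Y_i) ∩ Y_i = ∅ for all n ≥ 1). Then every coding word in 𝒜_n(f, ℱ) contains each letter Y_i at most once; consequently c_{f,ℱ}(n) ≤ Σ_{k=0}^{L} C(n,k) · L!/(L−k)!, a polynomial in n of degree L, and hence [c_{f,ℱ}(n)] ≤ [n^L]. -/
open Function Metric Set Topology Filter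

variable {M : Type*}

/-- Y is a wandering set for f: f^n(Y) ∩ Y = ∅ for all n ≥ 1. -/
def Wandering (f : M → M) (Y : Set M) : Prop :=
  ∀ n : ℕ, 1 ≤ n → f^[n] '' Y ∩ Y = ∅

/-- The non-wandering set Ω(f). -/
def NonwanderingSet [TopologicalSpace M] (f : M → M) : Set M :=
  {x | ∀ U : Set M, IsOpen U → x ∈ U → ∃ n : ℕ, 1 ≤ n ∧ (f^[n] '' U ∩ U).Nonempty}

/-- The word w (with letters in ℱ ∪ {∞}, where `some j` is the letter Y_j and `none`
is the letter ∞ = complement of ∪ℱ) is a coding of the orbit segment of x. -/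
def Codes {L : ℕ} (f : M → M) (Y : Fin L → Set M) {n : ℕ}
    (w : Fin n → Option (Fin L)) (x : M) : Prop :=
  ∀ i : Fin n, (w i).elim (f^[(i : ℕ)] x ∉ ⋃ j, Y j) (fun j => f^[(i : ℕ)] x ∈ Y j)

/-- 𝒜_n(f,ℱ): the set of all codings of all orbit segments of length n. -/
def CodingWords {L : ℕ} (f : M → M) (Y : Fin L → Set M) (n : ℕ) :
    Set (Fin n → Option (Fin L)) :=
  {w | ∃ x : M, Codes f Y w x}

/-- c_{f,ℱ}(n) = #𝒜_n(f,ℱ). -/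
noncomputable def codingCount {L : ℕ} (f : M → M) (Y : Fin L → Set M) (n : ℕ) : ℕ :=
  Nat.card (CodingWords f Y n)

/-- The sets Y₁,…,Y_L are mutually singular: for every N there are a point x and times
t i with f^[t i] x ∈ Y i and |t i − t j| > N for i ≠ j. -/
def MutuallySingular {L : ℕ} (f : M → M) (Y : Fin L → Set M) : Prop :=
  ∀ N : ℕ, ∃ x : M, ∃ t : Fin L → ℕ,
    (∀ i, f^[t i] x ∈ Y i) ∧ ∀ i j, i ≠ j → N < max (t i - t j) (t j - t i)

/-- E is an (n,ε)-separated set for f. -/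
def Separated [MetricSpace M] (f : M → M) (ε : ℝ) (n : ℕ) (E : Set M) : Prop :=
  ∀ x ∈ E, ∀ y ∈ E, x ≠ y → ∃ i : ℕ, i < n ∧ ε ≤ dist (f^[i] x) (f^[i] y)

/-- s_{f,ε}(n): the maximal cardinality of an (n,ε)-separated set. -/
noncomputable def sepCount [MetricSpace M] (f : M → M) (ε : ℝ) (n : ℕ) : ℕ :=
  sSup {k : ℕ | ∃ E : Finset M, Separated f ε n (E : Set M) ∧ E.card = k}

/-- The full orbit of p under the homeomorphism with inverse g. -/
def FullOrbit (f g : M → M) (p : M) : Set M :=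
  {y | ∃ n : ℕ, y = f^[n] p ∨ y = g^[n] p}

/-- The stable set of a set A: points whose forward orbit converges to A. -/
def StableSetOf [MetricSpace M] (f : M → M) (A : Set M) : Set M :=
  {x | Tendsto (fun n => infDist (f^[n] x) A) atTop (nhds 0)}

/-- p is a periodic point of f. -/
def IsPeriodicPoint (f : M → M) (p : M) : Prop := ∃ k : ℕ, 1 ≤ k ∧ f^[k] p = p

/-- The edge relation of the connection graph: p, q are periodic points with distinct
orbits and W^u(θ(p)) ∩ W^s(θ(q)) ≠ ∅. -/
def Conn [MetricSpace M] (f : M ≃ₜ M) (p q : M) : Prop :=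
  IsPeriodicPoint ⇑f p ∧ IsPeriodicPoint ⇑f q ∧
  FullOrbit ⇑f ⇑f.symm p ≠ FullOrbit ⇑f ⇑f.symm q ∧
  (StableSetOf ⇑f.symm (FullOrbit ⇑f ⇑f.symm p) ∩
    StableSetOf ⇑f (FullOrbit ⇑f ⇑f.symm q)).Nonempty

/-- L = L(f) is the length of the longest directed path in the connection graph. -/
def IsMaxPathLength [MetricSpace M] (f : M ≃ₜ M) (L : ℕ) : Prop :=
  (∃ c : Fin (L + 1) → M, ∀ i : Fin L, Conn f (c i.castSucc) (c i.succ)) ∧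
  ∀ m : ℕ, (∃ c : Fin (m + 1) → M, ∀ i : Fin m, Conn f (c i.castSucc) (c i.succ)) → m ≤ L

/-- A topological rendering of the Morse–Smale condition: finite non-wandering set,
all non-wandering points periodic, and the no-tangency consequence of transversality:
if W^u(θ(p)) accumulates on W^s(θ(q)) then it meets it. -/
def MorseSmaleLike [MetricSpace M] (f : M ≃ₜ M) : Prop :=
  (NonwanderingSet ⇑f).Finite ∧
  (∀ x ∈ NonwanderingSet ⇑f, IsPeriodicPoint ⇑f x) ∧
  ∀ p q : M, IsPeriodicPoint ⇑f p → IsPeriodicPoint ⇑f q →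
    (closure (StableSetOf ⇑f.symm (FullOrbit ⇑f ⇑f.symm p)) ∩
      StableSetOf ⇑f (FullOrbit ⇑f ⇑f.symm q)).Nonempty →
    (StableSetOf ⇑f.symm (FullOrbit ⇑f ⇑f.symm p) ∩
      StableSetOf ⇑f (FullOrbit ⇑f ⇑f.symm q)).Nonempty


open Classical in
noncomputable def sigFst {n L : ℕ} (w : Fin n → Option (Fin L)) : Finset (Fin L) :=
  Finset.univ.filter fun j => ∃ i, w i = some j

lemma mem_sigFst {n L : ℕ} {w : Fin n → Option (Fin L)} {j : Fin L} :
    j ∈ sigFst w ↔ ∃ i, w i = some j := by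
  classical simp [sigFst]

noncomputable def sigIdx {n L : ℕ} (w : Fin n → Option (Fin L)) (j : Fin L)
    (h : j ∈ sigFst w) : Fin n :=
  Classical.choose (mem_sigFst.mp h)

lemma sigIdx_spec {n L : ℕ} (w : Fin n → Option (Fin L)) (j : Fin L)
    (h : j ∈ sigFst w) : w (sigIdx w j h) = some j :=
  Classical.choose_spec (mem_sigFst.mp h)

noncomputable def mkSig {n L : ℕ} (w : Fin n → Option (Fin L))
    (hw : ∀ (j : Fin L) (i i' : Fin n), w i = some j → w i' = some j → i = i') :
    Σ s : Finset (Fin L), (↥s ↪ Fin n) :=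
  ⟨sigFst w, ⟨fun j => sigIdx w j.1 j.2, by
    intro j j' h
    have h1 := sigIdx_spec w j.1 j.2
    have h2 := sigIdx_spec w j'.1 j'.2
    have h' : sigIdx w j.1 j.2 = sigIdx w j'.1 j'.2 := h
    rw [h'] at h1
    exact Subtype.ext (Option.some.inj (h1.symm.trans h2))⟩⟩

lemma emb_heq {α β : Type*} {s₁ s₂ : Finset α} (hs : s₁ = s₂) {e₁ : ↥s₁ ↪ β} {e₂ : ↥s₂ ↪ β}
    (he : HEq e₁ e₂) {j : α} (h₁ : j ∈ s₁) (h₂ : j ∈ s₂) : e₁ ⟨j, h₁⟩ = e₂ ⟨j, h₂⟩ := by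
  subst hs; rw [eq_of_heq he]

lemma sigma_card {n L : ℕ} :
    Nat.card (Σ s : Finset (Fin L), (↥s ↪ Fin n)) =
      ∑ k ∈ Finset.range (L + 1), n.choose k * (L.factorial / (L - k).factorial) := by
  classical
  rw [Nat.card_eq_fintype_card, Fintype.card_sigma]
  have h1 : ∀ s : Finset (Fin L), Fintype.card (↥s ↪ Fin n) = n.descFactorial s.card := by
    intro s
    rw [Fintype.card_embedding_eq, Fintype.card_coe, Fintype.card_fin]
  calc (∑ s : Finset (Fin L), Fintype.card (↥s ↪ Fin n))
      = ∑ s ∈ (Finset.univ : Finset (Fin L)).powerset, n.descFactorial s.card := by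
        rw [Finset.powerset_univ]; exact Finset.sum_congr rfl fun s _ => h1 s
    _ = ∑ k ∈ Finset.range ((Finset.univ : Finset (Fin L)).card + 1),
          (Finset.univ : Finset (Fin L)).card.choose k • n.descFactorial k :=
        Finset.sum_powerset_apply_card _
    _ = ∑ k ∈ Finset.range (L + 1), n.choose k * (L.factorial / (L - k).factorial) := by
        rw [Finset.card_univ, Fintype.card_fin]
        refine Finset.sum_congr rfl fun k hk => ?_
        have hkL : k ≤ L := Nat.lt_succ_iff.mp (Finset.mem_range.mp hk)
        rw [smul_eq_mul, ← Nat.descFactorial_eq_div hkL,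
          Nat.descFactorial_eq_factorial_mul_choose n k,
          Nat.descFactorial_eq_factorial_mul_choose L k]
        ring

lemma aux_card {n L : ℕ} (S : Set (Fin n → Option (Fin L)))
    (hS : ∀ w ∈ S, ∀ (j : Fin L) (i i' : Fin n), w i = some j → w i' = some j → i = i') :
    Nat.card S ≤ ∑ k ∈ Finset.range (L + 1), n.choose k * (L.factorial / (L - k).factorial) := by
  classical
  rw [← sigma_card]
  refine Nat.card_le_card_of_injective
    (fun w : S => mkSig w.1 (hS w.1 w.2)) ?_
  intro w w' h
  obtain ⟨hs, he⟩ := Sigma.mk.inj_iff.mp h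
  have key : ∀ (v v' : S), sigFst v.1 = sigFst v'.1 →
      HEq (mkSig v.1 (hS v.1 v.2)).2 (mkSig v'.1 (hS v'.1 v'.2)).2 →
      ∀ (i : Fin n) (j : Fin L), v.1 i = some j → v'.1 i = some j := by
    intro v v' hss hee i j hij
    have hj : j ∈ sigFst v.1 := mem_sigFst.mpr ⟨i, hij⟩
    have hj' : j ∈ sigFst v'.1 := hss ▸ hj
    have e1 : sigIdx v.1 j hj = i := hS v.1 v.2 j _ i (sigIdx_spec v.1 j hj) hij
    have e2 : sigIdx v.1 j hj = sigIdx v'.1 j hj' := emb_heq hss hee hj hj'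
    have := sigIdx_spec v'.1 j hj'
    rwa [← e2, e1] at this
  apply Subtype.ext
  funext i
  cases hwi : w.1 i with
  | some j => exact ((key w w' hs he i j hwi).symm)
  | none =>
    cases hwi' : w'.1 i with
    | some j =>
      exact absurd (key w' w hs.symm he.symm i j hwi') (by rw [hwi]; simp)
    | none => rfl

/-- for a homeomorphism f of a compact metric space and a finite family of
pairwise disjoint wandering subsets, every coding word contains each letter Y_i at most
once; consequently c_{f,ℱ}(n) ≤ Σ_{k=0}^{L} C(n,k)·L!/(L−k)!, and hence [c_{f,ℱ}(n)] ≤ [n^L]. -/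
theorem coding_count_upper_bound {M : Type*} [MetricSpace M] [CompactSpace M] (f : M ≃ₜ M)
    {L : ℕ} (Y : Fin L → Set M)
    (hdisj : Pairwise fun i j => Disjoint (Y i) (Y j))
    (hwand : ∀ i, Wandering ⇑f (Y i)) :
    (∀ n : ℕ, ∀ w ∈ CodingWords ⇑f Y n, ∀ j : Fin L, ∀ i i' : Fin n,
        w i = some j → w i' = some j → i = i') ∧
    (∀ n : ℕ, codingCount ⇑f Y n ≤
        ∑ k ∈ Finset.range (L + 1), n.choose k * (L.factorial / (L - k).factorial)) ∧
    ∃ C : ℝ, 0 < C ∧ ∀ n : ℕ, 1 ≤ n → (codingCount ⇑f Y n : ℝ) ≤ C * (n : ℝ) ^ L := by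
  classical
  have once : ∀ n : ℕ, ∀ w ∈ CodingWords ⇑f Y n, ∀ j : Fin L, ∀ i i' : Fin n,
      w i = some j → w i' = some j → i = i' := by
    intro n w hw j i i' hi hi'
    obtain ⟨x, hx⟩ := hw
    have mi : f^[(i : ℕ)] x ∈ Y j := by have := hx i; rw [hi] at this; exact this
    have mi' : f^[(i' : ℕ)] x ∈ Y j := by have := hx i'; rw [hi'] at this; exact this
    have key : ∀ a b : ℕ, a < b → f^[a] x ∈ Y j → f^[b] x ∈ Y j → False := by
      intro a b hab ha hb
      have hmem : f^[b] x ∈ f^[b - a] '' Y j := by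
        refine ⟨f^[a] x, ha, ?_⟩
        rw [← Function.iterate_add_apply]
        congr 1
        omega
      have hE := hwand j (b - a) (by omega)
      exact absurd (Set.mem_inter hmem hb) (by rw [hE]; exact Set.notMem_empty _)
    rcases lt_trichotomy (i : ℕ) (i' : ℕ) with h | h | h
    · exact absurd (key _ _ h mi mi') (by simp)
    · exact Fin.ext h
    · exact absurd (key _ _ h mi' mi) (by simp)
  refine ⟨once, ?_, ?_⟩
  · intro n
    exact aux_card (CodingWords ⇑f Y n) (once n)
  · refine ⟨((L + 1) * L.factorial : ℕ), by positivity, ?_⟩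
    intro n hn
    have h1 : codingCount ⇑f Y n ≤
        ∑ k ∈ Finset.range (L + 1), n.choose k * (L.factorial / (L - k).factorial) :=
      aux_card (CodingWords ⇑f Y n) (once n)
    have h2 : ∑ k ∈ Finset.range (L + 1), n.choose k * (L.factorial / (L - k).factorial) ≤
        (L + 1) * L.factorial * n ^ L := by
      calc ∑ k ∈ Finset.range (L + 1), n.choose k * (L.factorial / (L - k).factorial)
          ≤ ∑ _k ∈ Finset.range (L + 1), L.factorial * n ^ L := by
            refine Finset.sum_le_sum fun k hk => ?_
            have hkL : k ≤ L := Nat.lt_succ_iff.mp (Finset.mem_range.mp hk)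
            have c1 : n.choose k ≤ n ^ k := Nat.choose_le_pow n k
            have c2 : L.factorial / (L - k).factorial ≤ L.factorial := Nat.div_le_self _ _
            have c3 : n ^ k ≤ n ^ L := Nat.pow_le_pow_right hn hkL
            calc n.choose k * (L.factorial / (L - k).factorial)
                ≤ n ^ L * L.factorial := Nat.mul_le_mul (c1.trans c3) c2
              _ = L.factorial * n ^ L := Nat.mul_comm _ _
        _ = (L + 1) * L.factorial * n ^ L := by
            rw [Finset.sum_const, Finset.card_range]
            simp [mul_assoc]
    have := h1.trans h2
    calc (codingCount ⇑f Y n : ℝ) ≤ (((L + 1) * L.factorial * n ^ L : ℕ) : ℝ) := by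
          exact_mod_cast this
      _ = ((L + 1) * L.factorial : ℕ) * (n : ℝ) ^ L := by push_cast; ring
end

section
/- Let f : M → M be a homeomorphism of a compact metric space and ℱ = {Y₁, …, Y_L} a finite family of pairwise disjoint wandering subsets of M. Choose compact pairwise disjoint wandering neighborhoods U_i ⊇ Y_i and let ε > 0 be smaller than the distance from each Y_i to the complement of U_i. If two points x, y admit codings w ≠ z of their length-n orbit segments that use exactly the same set of letters from ℱ (plus ∞), then x and y are (n, ε)-separated, i.e. d(f^i(x), f^i(y)) > ε for some 0 ≤ i ≤ n−1. -/
open Function Metric Set Topology Filter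

variable {M : Type*}

lemma wandering_unique_time {M : Type*} {f : M → M} {S : Set M} (h : Wandering f S)
    {p : M} {a b : ℕ} (ha : f^[a] p ∈ S) (hb : f^[b] p ∈ S) : a = b := by
  rcases lt_trichotomy a b with hlt | he | hlt
  · exfalso
    have hmem : f^[b] p ∈ f^[b-a] '' S ∩ S := by
      refine ⟨⟨f^[a] p, ha, ?_⟩, hb⟩
      rw [← Function.iterate_add_apply]
      congr 1; omega
    rw [h (b-a) (by omega)] at hmem; exact hmem
  · exact he
  · exfalso
    have hmem : f^[a] p ∈ f^[a-b] '' S ∩ S := by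
      refine ⟨⟨f^[b] p, hb, ?_⟩, ha⟩
      rw [← Function.iterate_add_apply]
      congr 1; omega
    rw [h (a-b) (by omega)] at hmem; exact hmem

/-- with pairwise disjoint wandering sets Y_i, compact pairwise disjoint
wandering neighborhoods U_i ⊇ Y_i, and ε > 0 smaller than the distance from each Y_i to
the complement of U_i, any two points admitting distinct codings with the same set of
letters are (n,ε)-separated. -/
theorem distinct_codings_separated {M : Type*} [MetricSpace M] [CompactSpace M] (f : M ≃ₜ M)
    {L : ℕ} (Y U : Fin L → Set M)
    (hdisjY : Pairwise fun i j => Disjoint (Y i) (Y j))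
    (hwandY : ∀ i, Wandering ⇑f (Y i))
    (hUcomp : ∀ i, IsCompact (U i))
    (hdisjU : Pairwise fun i j => Disjoint (U i) (U j))
    (hwandU : ∀ i, Wandering ⇑f (U i))
    (hYU : ∀ i, Y i ⊆ U i)
    (ε : ℝ) (hε : 0 < ε)
    (hεd : ∀ i, ∀ x ∈ Y i, ∀ y, y ∉ U i → ε < dist x y)
    {n : ℕ} (w z : Fin n → Option (Fin L)) (x y : M)
    (hw : Codes ⇑f Y w x) (hz : Codes ⇑f Y z y)
    (hletters : {j : Fin L | ∃ i, w i = some j} = {j : Fin L | ∃ i, z i = some j})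
    (hne : w ≠ z) :
    ∃ i : Fin n, ε < dist ((⇑f)^[(i : ℕ)] x) ((⇑f)^[(i : ℕ)] y) := by
  by_contra hcon
  push_neg at hcon
  apply hne
  have hwz : ∀ (i : Fin n) (j : Fin L), w i = some j → z i = some j := by
    intro i j hwi
    have hx : (⇑f)^[(i : ℕ)] x ∈ Y j := by
      have := hw i; rw [hwi] at this; exact this
    have hjz : j ∈ {j : Fin L | ∃ i, z i = some j} := by
      rw [← hletters]; exact ⟨i, hwi⟩
    obtain ⟨i', hzi'⟩ := hjz
    have hy' : (⇑f)^[(i' : ℕ)] y ∈ U j := by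
      have := hz i'; rw [hzi'] at this; exact hYU j this
    have hy2 : (⇑f)^[(i : ℕ)] y ∈ U j := by
      by_contra hnot
      exact absurd (hcon i) (not_le.mpr (hεd j _ hx _ hnot))
    have heq' : (i : ℕ) = (i' : ℕ) := wandering_unique_time (hwandU j) hy2 hy'
    have heq : i = i' := Fin.ext heq'
    rw [heq]; exact hzi'
  have hzw : ∀ (i : Fin n) (j : Fin L), z i = some j → w i = some j := by
    intro i j hzi
    have hy : (⇑f)^[(i : ℕ)] y ∈ Y j := by
      have := hz i; rw [hzi] at this; exact this
    have hjw : j ∈ {j : Fin L | ∃ i, w i = some j} := by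
      rw [hletters]; exact ⟨i, hzi⟩
    obtain ⟨i', hwi'⟩ := hjw
    have hx' : (⇑f)^[(i' : ℕ)] x ∈ U j := by
      have := hw i'; rw [hwi'] at this; exact hYU j this
    have hx2 : (⇑f)^[(i : ℕ)] x ∈ U j := by
      by_contra hnot
      have := hεd j _ hy _ hnot
      rw [dist_comm] at this
      exact absurd (hcon i) (not_le.mpr this)
    have heq' : (i : ℕ) = (i' : ℕ) := wandering_unique_time (hwandU j) hx2 hx'
    have heq : i = i' := Fin.ext heq'
    rw [heq]; exact hwi'
  funext i
  cases hwi : w i with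
  | some j => exact (hwz i j hwi).symm
  | none =>
    cases hzi : z i with
    | none => rfl
    | some j => rw [hzw i j hzi] at hwi; exact absurd hwi (by simp)
end

section
/- Let f : M → M be a homeomorphism and ℱ = {Y₁, Y₂, Y₃, …, Y_L} a finite family of subsets such that Y₁ ∪ Y₂ is wandering for f. Then [c_{f,ℱ}(n)] = sup{ [c_{f,ℱ₁}(n)], [c_{f,ℱ₂}(n)] }, where ℱ₁ = {Y₁, Y₃, …, Y_L} and ℱ₂ = {Y₂, Y₃, …, Y_L}. -/
open Function Metric Set Topology Filter

variable {M : Type*}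

lemma wander_not_both {f : M → M} {S : Set M} (hwand : Wandering f S)
    {x : M} {a b : ℕ} (hab : a < b) (ha : f^[a] x ∈ S) (hb : f^[b] x ∈ S) : False := by
  have h := hwand (b - a) (by omega)
  have hmem : f^[b] x ∈ f^[b - a] '' S ∩ S := by
    refine ⟨⟨f^[a] x, ha, ?_⟩, hb⟩
    rw [← Function.iterate_add_apply]
    congr 1
    omega
  rw [h] at hmem
  exact hmem

lemma codingCount_le_of_embed {L₁ L₂ : ℕ} (f : M → M)
    (Y' : Fin L₁ → Set M) (Y : Fin L₂ → Set M)
    (e : Fin L₁ → Fin L₂) (he : Function.Injective e) (b : Fin L₂)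
    (hb : b ∉ Set.range e) (hY : ∀ k, Y (e k) = Y' k)
    (hsub : (⋃ k, Y k) ⊆ (⋃ k, Y' k) ∪ Y b) (n : ℕ) :
    codingCount f Y' n ≤ codingCount f Y n := by
  classical
  have hfin : Finite (CodingWords f Y n) := (Set.toFinite _).to_subtype
  have code : ∀ (w : Fin n → Option (Fin L₁)) (x : M), Codes f Y' w x →
      Codes f Y (fun i => (w i).elim
        (if f^[(i : ℕ)] x ∈ Y b then some b else none) (fun k => some (e k))) x := by
    intro w x hx i
    have hxi := hx i
    cases hw : w i with
    | none =>
      rw [hw] at hxi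
      simp only [Option.elim] at hxi
      by_cases hB : f^[(i : ℕ)] x ∈ Y b
      · simp only [hw, Option.elim, if_pos hB]
        exact hB
      · simp only [hw, Option.elim, if_neg hB]
        intro hmem
        rcases hsub hmem with h | h
        · exact hxi h
        · exact hB h
    | some k =>
      rw [hw] at hxi
      simp only [hw, Option.elim] at hxi ⊢
      rw [hY k]
      exact hxi
  let Φ : CodingWords f Y' n → CodingWords f Y n := fun w =>
    ⟨fun i => (w.1 i).elim
        (if f^[(i : ℕ)] w.2.choose ∈ Y b then some b else none) (fun k => some (e k)),
      w.2.choose, code w.1 w.2.choose w.2.choose_spec⟩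
  have hΦ : Function.Injective Φ := by
    intro w w' h
    apply Subtype.ext
    funext i
    have hi := congrFun (congrArg Subtype.val h) i
    simp only [Φ] at hi
    cases hw : w.1 i with
    | none =>
      cases hw' : w'.1 i with
      | none => rfl
      | some k' =>
        rw [hw, hw'] at hi
        simp only [Option.elim] at hi
        split_ifs at hi with hB
        · have : b = e k' := by simpa using hi
          exact absurd ⟨k', this.symm⟩ hb
    | some k =>
      cases hw' : w'.1 i with
      | none =>
        rw [hw, hw'] at hi
        simp only [Option.elim] at hi
        split_ifs at hi with hB
        · have : e k = b := by simpa using hi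
          exact absurd ⟨k, this⟩ hb
      | some k' =>
        rw [hw, hw'] at hi
        simp only [Option.elim, Option.some.injEq] at hi
        rw [he hi]
  exact Nat.card_le_card_of_injective Φ hΦ

lemma codingCount_upper {L : ℕ} (f : M → M) (A B : Set M) (Z : Fin L → Set M)
    (hwand : Wandering f (A ∪ B)) (n : ℕ) :
    codingCount f (Fin.cons A (Fin.cons B Z)) n ≤
      codingCount f (Fin.cons A Z) n + codingCount f (Fin.cons B Z) n := by
  classical
  set Y : Fin (L + 2) → Set M := Fin.cons A (Fin.cons B Z) with hYdef
  have hY0 : Y 0 = A := Fin.cons_zero _ _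
  have hY1 : Y 1 = B := by
    rw [← Fin.succ_zero_eq_one, hYdef, Fin.cons_succ, Fin.cons_zero]
  have hY2 : ∀ j : Fin L, Y j.succ.succ = Z j := by
    intro j; rw [hYdef, Fin.cons_succ, Fin.cons_succ]
  have hfin1 : Finite (CodingWords f (Fin.cons A Z) n) := (Set.toFinite _).to_subtype
  have hfin2 : Finite (CodingWords f (Fin.cons B Z) n) := (Set.toFinite _).to_subtype
  -- no word contains both letter 0 and letter 1
  have key1 : ∀ (w : Fin n → Option (Fin (L + 2))) (x : M), Codes f Y w x →
      ∀ i j : Fin n, w i = some 0 → w j = some 1 → False := by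
    intro w x hx i j hi hj
    have hA : f^[(i : ℕ)] x ∈ A := by
      have := hx i; rw [hi] at this; simp only [Option.elim] at this; rwa [hY0] at this
    have hB : f^[(j : ℕ)] x ∈ B := by
      have := hx j; rw [hj] at this; simp only [Option.elim] at this; rwa [hY1] at this
    rcases lt_trichotomy (i : ℕ) (j : ℕ) with h | h | h
    · exact wander_not_both hwand h (Or.inl hA) (Or.inr hB)
    · have hij : i = j := Fin.ext h
      rw [hij, hj] at hi
      simp at hi
    · exact wander_not_both hwand h (Or.inr hB) (Or.inl hA)
  -- relabeling maps
  set r₁ : Fin (L + 2) → Fin (L + 1) :=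
    Fin.cases 0 (Fin.cases 0 Fin.succ) with hr₁
  set r₂ : Fin (L + 2) → Fin (L + 1) :=
    Fin.cases 0 (fun k => k) with hr₂
  have code1 : ∀ (w : Fin n → Option (Fin (L + 2))) (x : M), Codes f Y w x →
      (¬ ∃ i, w i = some 1) → Codes f (Fin.cons A Z) (fun i => (w i).map r₁) x := by
    intro w x hx h i
    have hxi := hx i
    cases hw : w i with
    | none =>
      rw [hw] at hxi
      simp only [hw, Option.map_none, Option.elim]
      intro hmem
      rw [Set.mem_iUnion] at hmem
      obtain ⟨k, hk⟩ := hmem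
      apply hxi
      rw [Set.mem_iUnion]
      induction k using Fin.cases with
      | zero => exact ⟨0, by rw [hY0]; simpa using hk⟩
      | succ j => exact ⟨j.succ.succ, by rw [hY2]; simpa using hk⟩
    | some k =>
      rw [hw] at hxi
      simp only [Option.elim] at hxi
      simp only [hw, Option.map_some, Option.elim]
      induction k using Fin.cases with
      | zero =>
        simp only [hr₁, Fin.cases_zero]
        rw [Fin.cons_zero, ← hY0]
        exact hxi
      | succ m =>
        induction m using Fin.cases with
        | zero =>
          exact absurd ⟨i, by rw [hw, Fin.succ_zero_eq_one]⟩ h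
        | succ j =>
          simp only [hr₁, Fin.cases_succ]
          rw [Fin.cons_succ, ← hY2]
          exact hxi
  have code2 : ∀ (w : Fin n → Option (Fin (L + 2))) (x : M), Codes f Y w x →
      (∃ i, w i = some 1) → Codes f (Fin.cons B Z) (fun i => (w i).map r₂) x := by
    intro w x hx h i
    obtain ⟨i₁, hi₁⟩ := h
    have hno0 : ∀ j, w j ≠ some 0 := fun j hj => key1 w x hx j i₁ hj hi₁
    have hxi := hx i
    cases hw : w i with
    | none =>
      rw [hw] at hxi
      simp only [hw, Option.map_none, Option.elim]
      intro hmem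
      rw [Set.mem_iUnion] at hmem
      obtain ⟨k, hk⟩ := hmem
      apply hxi
      rw [Set.mem_iUnion]
      exact ⟨k.succ, by rwa [hYdef, Fin.cons_succ]⟩
    | some k =>
      rw [hw] at hxi
      simp only [Option.elim] at hxi
      simp only [hw, Option.map_some, Option.elim]
      induction k using Fin.cases with
      | zero => exact absurd hw (hno0 i)
      | succ m =>
        simp only [hr₂, Fin.cases_succ]
        rw [hYdef, Fin.cons_succ] at hxi
        exact hxi
  let Ψ : CodingWords f Y n → (CodingWords f (Fin.cons A Z) n) ⊕ (CodingWords f (Fin.cons B Z) n) :=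
    fun w =>
      if h : ∃ i, w.1 i = some 1 then
        Sum.inr ⟨fun i => (w.1 i).map r₂, w.2.choose, code2 w.1 w.2.choose w.2.choose_spec h⟩
      else
        Sum.inl ⟨fun i => (w.1 i).map r₁, w.2.choose, code1 w.1 w.2.choose w.2.choose_spec h⟩
  have hΨ : Function.Injective Ψ := by
    intro w w' heq
    by_cases h : ∃ i, w.1 i = some 1 <;> by_cases h' : ∃ i, w'.1 i = some 1 <;>
      simp only [Ψ] at heq
    · -- both inr
      rw [dif_pos h, dif_pos h'] at heq
      have hv : (fun i => (w.1 i).map r₂) = (fun i => (w'.1 i).map r₂) := by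
        have := Sum.inr_injective heq
        exact congrArg Subtype.val this
      have hno0 : ∀ j, w.1 j ≠ some 0 := by
        obtain ⟨i₁, hi₁⟩ := h
        exact fun j hj => key1 w.1 w.2.choose w.2.choose_spec j i₁ hj hi₁
      have hno0' : ∀ j, w'.1 j ≠ some 0 := by
        obtain ⟨i₁, hi₁⟩ := h'
        exact fun j hj => key1 w'.1 w'.2.choose w'.2.choose_spec j i₁ hj hi₁
      apply Subtype.ext
      funext i
      have hi := congrFun hv i
      cases hw : w.1 i with
      | none =>
        cases hw' : w'.1 i with
        | none => rfl
        | some k' => rw [hw, hw'] at hi; simp at hi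
      | some k =>
        cases hw' : w'.1 i with
        | none => rw [hw, hw'] at hi; simp at hi
        | some k' =>
          rw [hw, hw'] at hi
          simp only [Option.map_some, Option.some.injEq] at hi
          induction k using Fin.cases with
          | zero => exact absurd hw (hno0 i)
          | succ m =>
            induction k' using Fin.cases with
            | zero => exact absurd hw' (hno0' i)
            | succ m' =>
              simp only [hr₂, Fin.cases_succ] at hi
              rw [hi]
    · rw [dif_pos h, dif_neg h'] at heq
      exact absurd heq (by simp)
    · rw [dif_neg h, dif_pos h'] at heq
      exact absurd heq (by simp)
    · -- both inl
      rw [dif_neg h, dif_neg h'] at heq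
      have hv : (fun i => (w.1 i).map r₁) = (fun i => (w'.1 i).map r₁) := by
        have := Sum.inl_injective heq
        exact congrArg Subtype.val this
      push_neg at h h'
      apply Subtype.ext
      funext i
      have hi := congrFun hv i
      cases hw : w.1 i with
      | none =>
        cases hw' : w'.1 i with
        | none => rfl
        | some k' => rw [hw, hw'] at hi; simp at hi
      | some k =>
        cases hw' : w'.1 i with
        | none => rw [hw, hw'] at hi; simp at hi
        | some k' =>
          rw [hw, hw'] at hi
          simp only [Option.map_some, Option.some.injEq] at hi
          have hk1 : k ≠ 1 := fun hk => (h i) (by rw [hw, hk])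
          have hk1' : k' ≠ 1 := fun hk => (h' i) (by rw [hw', hk])
          induction k using Fin.cases with
          | zero =>
            induction k' using Fin.cases with
            | zero => rfl
            | succ m' =>
              induction m' using Fin.cases with
              | zero => exact absurd (Fin.succ_zero_eq_one) fun e => hk1' (e ▸ rfl)
              | succ j' =>
                simp only [hr₁, Fin.cases_zero, Fin.cases_succ] at hi
                exact absurd hi.symm (Fin.succ_ne_zero j')
          | succ m =>
            induction m using Fin.cases with
            | zero => exact absurd Fin.succ_zero_eq_one fun e => hk1 (e ▸ rfl)
            | succ j =>
              induction k' using Fin.cases with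
              | zero =>
                simp only [hr₁, Fin.cases_zero, Fin.cases_succ] at hi
                exact absurd hi (Fin.succ_ne_zero j)
              | succ m' =>
                induction m' using Fin.cases with
                | zero => exact absurd Fin.succ_zero_eq_one fun e => hk1' (e ▸ rfl)
                | succ j' =>
                  simp only [hr₁, Fin.cases_succ] at hi
                  rw [Fin.succ_injective _ hi]
  calc codingCount f Y n
      ≤ Nat.card ((CodingWords f (Fin.cons A Z) n) ⊕ (CodingWords f (Fin.cons B Z) n)) := by
        have : Finite (CodingWords f Y n) := (Set.toFinite _).to_subtype
        exact Nat.card_le_card_of_injective Ψ hΨ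
    _ = codingCount f (Fin.cons A Z) n + codingCount f (Fin.cons B Z) n := Nat.card_sum

/-- if Y₁ ∪ Y₂ is wandering, then [c_{f,ℱ}(n)] = sup{[c_{f,ℱ₁}(n)], [c_{f,ℱ₂}(n)]},
where ℱ = {Y₁,Y₂,Y₃,…}, ℱ₁ omits Y₂ and ℱ₂ omits Y₁; the supremum of two classes is the
class of the pointwise maximum, so the equality is stated via two-sided constants. -/
theorem coding_count_union_wandering {M : Type*} [MetricSpace M] [CompactSpace M] (f : M ≃ₜ M)
    {L : ℕ} (A B : Set M) (Z : Fin L → Set M)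
    (hwand : Wandering ⇑f (A ∪ B)) :
    ∃ c₁ c₂ : ℝ, 0 < c₁ ∧ 0 < c₂ ∧ ∀ n : ℕ,
      c₁ * max (codingCount ⇑f (Fin.cons A Z) n : ℝ) (codingCount ⇑f (Fin.cons B Z) n : ℝ) ≤
          (codingCount ⇑f (Fin.cons A (Fin.cons B Z)) n : ℝ) ∧
      (codingCount ⇑f (Fin.cons A (Fin.cons B Z)) n : ℝ) ≤
          c₂ * max (codingCount ⇑f (Fin.cons A Z) n : ℝ) (codingCount ⇑f (Fin.cons B Z) n : ℝ) := by
  classical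
  set Y : Fin (L + 2) → Set M := Fin.cons A (Fin.cons B Z) with hYdef
  have hY0 : Y 0 = A := Fin.cons_zero _ _
  have hY1 : Y 1 = B := by
    rw [← Fin.succ_zero_eq_one, hYdef, Fin.cons_succ, Fin.cons_zero]
  have hY2 : ∀ j : Fin L, Y j.succ.succ = Z j := by
    intro j; rw [hYdef, Fin.cons_succ, Fin.cons_succ]
  -- embedding for ℱ₁
  set e₁ : Fin (L + 1) → Fin (L + 2) :=
    Fin.cases 0 (fun j => j.succ.succ) with he₁def
  have he₁ : Function.Injective e₁ := by
    intro a a' h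
    induction a using Fin.cases with
    | zero =>
      induction a' using Fin.cases with
      | zero => rfl
      | succ j =>
        simp only [he₁def, Fin.cases_zero, Fin.cases_succ] at h
        exact absurd h.symm (Fin.succ_ne_zero _)
    | succ j =>
      induction a' using Fin.cases with
      | zero =>
        simp only [he₁def, Fin.cases_zero, Fin.cases_succ] at h
        exact absurd h (Fin.succ_ne_zero _)
      | succ j' =>
        simp only [he₁def, Fin.cases_succ] at h
        rw [Fin.succ_injective _ (Fin.succ_injective _ h)]
  have hb₁ : (1 : Fin (L + 2)) ∉ Set.range e₁ := by
    rintro ⟨k, hk⟩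
    induction k using Fin.cases with
    | zero =>
      simp only [he₁def, Fin.cases_zero] at hk
      rw [← Fin.succ_zero_eq_one] at hk
      exact Fin.succ_ne_zero _ hk.symm
    | succ j =>
      simp only [he₁def, Fin.cases_succ] at hk
      rw [← Fin.succ_zero_eq_one] at hk
      exact Fin.succ_ne_zero _ (Fin.succ_injective _ hk)
  have hY₁ : ∀ k : Fin (L + 1), Y (e₁ k) = (Fin.cons A Z : Fin (L+1) → Set M) k := by
    intro k
    induction k using Fin.cases with
    | zero => simp only [he₁def, Fin.cases_zero, hY0, Fin.cons_zero]
    | succ j => simp only [he₁def, Fin.cases_succ, hY2, Fin.cons_succ]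
  have hsub₁ : (⋃ k, Y k) ⊆ (⋃ k, (Fin.cons A Z : Fin (L+1) → Set M) k) ∪ Y 1 := by
    intro x hx
    rw [Set.mem_iUnion] at hx
    obtain ⟨k, hk⟩ := hx
    induction k using Fin.cases with
    | zero =>
      left; rw [Set.mem_iUnion]
      exact ⟨0, by rwa [Fin.cons_zero, ← hY0]⟩
    | succ m =>
      induction m using Fin.cases with
      | zero =>
        right; rwa [← Fin.succ_zero_eq_one]
      | succ j =>
        left; rw [Set.mem_iUnion]
        exact ⟨j.succ, by rwa [Fin.cons_succ, ← hY2]⟩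
  have h1 : ∀ n, codingCount ⇑f (Fin.cons A Z) n ≤ codingCount ⇑f Y n :=
    fun n => codingCount_le_of_embed ⇑f (Fin.cons A Z) Y e₁ he₁ 1 hb₁ hY₁ hsub₁ n
  -- embedding for ℱ₂
  have hb₂ : (0 : Fin (L + 2)) ∉ Set.range (Fin.succ : Fin (L + 1) → Fin (L + 2)) := by
    rintro ⟨k, hk⟩
    exact Fin.succ_ne_zero k hk
  have hY₂ : ∀ k : Fin (L + 1), Y k.succ = (Fin.cons B Z : Fin (L+1) → Set M) k := fun k => by
    rw [hYdef, Fin.cons_succ]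
  have hsub₂ : (⋃ k, Y k) ⊆ (⋃ k, (Fin.cons B Z : Fin (L+1) → Set M) k) ∪ Y 0 := by
    intro x hx
    rw [Set.mem_iUnion] at hx
    obtain ⟨k, hk⟩ := hx
    induction k using Fin.cases with
    | zero => right; exact hk
    | succ m =>
      left; rw [Set.mem_iUnion]
      exact ⟨m, by rwa [← hY₂]⟩
  have h2 : ∀ n, codingCount ⇑f (Fin.cons B Z) n ≤ codingCount ⇑f Y n :=
    fun n => codingCount_le_of_embed ⇑f (Fin.cons B Z) Y Fin.succ
      (Fin.succ_injective _) 0 hb₂ hY₂ hsub₂ n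
  have h3 : ∀ n, codingCount ⇑f Y n ≤
      codingCount ⇑f (Fin.cons A Z) n + codingCount ⇑f (Fin.cons B Z) n :=
    fun n => codingCount_upper ⇑f A B Z hwand n
  refine ⟨1, 2, one_pos, two_pos, fun n => ⟨?_, ?_⟩⟩
  · rw [one_mul]
    exact max_le (Nat.cast_le.2 (h1 n)) (Nat.cast_le.2 (h2 n))
  · calc (codingCount ⇑f Y n : ℝ)
        ≤ (codingCount ⇑f (Fin.cons A Z) n : ℝ) + (codingCount ⇑f (Fin.cons B Z) n : ℝ) := by
          exact_mod_cast h3 n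
      _ ≤ 2 * max (codingCount ⇑f (Fin.cons A Z) n : ℝ) (codingCount ⇑f (Fin.cons B Z) n : ℝ) := by
          rw [two_mul]
          exact add_le_add (le_max_left _ _) (le_max_right _ _)
end

section
/- Let f : M → M be a homeomorphism and Y₁,…,Y_L pairwise disjoint wandering subsets that are NOT mutually singular, witnessed by a bound M₀: whenever f^{n_i}(x) ∈ Y_i and f^{n_j}(x) ∈ Y_j with i ≠ j, then |n_i − n_j| ≤ M₀. Fix i ≠ j and let 𝒜_n({i,j}) be the set of coding words of length n using all letters Y₁,…,Y_L in which the letters Y_i and Y_j occur at positions at most M₀ apart. Then the map sending a word w ∈ 𝒜_n({i,j}) to the word w′ obtained by replacing the unique occurrence of Y_i by ∞ lands in 𝒜_n(ℱ, ℱ∖{Y_i}) and is at most 2M₀-to-one; consequently #𝒜_n({i,j}) ≤ 2M₀ · #𝒜_n(ℱ, ℱ∖{Y_i}). -/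
open Function Metric Set Topology Filter

variable {M : Type*}

/-- Coding relative to the subfamily S ⊆ {1,…,L}: letter `some j` (j ∈ S) means the point
lies in Y j, letter `none` (∞) means it lies outside ⋃_{j ∈ S} Y j. -/
def CodesOn {M : Type*} {L : ℕ} (f : M → M) (Y : Fin L → Set M) (S : Set (Fin L)) {n : ℕ}
    (w : Fin n → Option (Fin L)) (x : M) : Prop :=
  ∀ p : Fin n, (w p).elim (f^[(p : ℕ)] x ∉ ⋃ j ∈ S, Y j)
    (fun j => j ∈ S ∧ f^[(p : ℕ)] x ∈ Y j)

/-- 𝒜_n(ℱ, S): coding words (relative to the subfamily S) whose set of letters is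
exactly S ∪ {∞}. -/
def WordsExact {M : Type*} {L : ℕ} (f : M → M) (Y : Fin L → Set M) (S : Set (Fin L)) (n : ℕ) :
    Set (Fin n → Option (Fin L)) :=
  {w | (∃ x : M, CodesOn f Y S w x) ∧ {j : Fin L | ∃ p, w p = some j} = S}

/-- 𝒜_n({i,j}): coding words using all letters, in which Y_i and Y_j occur at positions
at most M₀ apart. -/
def PairWords {M : Type*} {L : ℕ} (f : M → M) (Y : Fin L → Set M) (M₀ : ℕ) (i j : Fin L)
    (n : ℕ) : Set (Fin n → Option (Fin L)) :=
  {w | w ∈ WordsExact f Y Set.univ n ∧ ∃ p q : Fin n,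
    w p = some i ∧ w q = some j ∧ (p : ℕ) ≤ (q : ℕ) + M₀ ∧ (q : ℕ) ≤ (p : ℕ) + M₀}

/-- Replace the occurrences of the letter Y_i by ∞. -/
def replaceLetter {L n : ℕ} (i : Fin L) (w : Fin n → Option (Fin L)) :
    Fin n → Option (Fin L) :=
  fun p => if w p = some i then none else w p


lemma wandering_unique' {M : Type*} {f : M → M} {Y : Set M} (h : Wandering f Y) {x : M}
    {a b : ℕ} (ha : f^[a] x ∈ Y) (hb : f^[b] x ∈ Y) : a = b := by
  by_contra hne
  wlog hlt : a < b generalizing a b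
  · exact this hb ha (Ne.symm hne) (by omega)
  have hmem : f^[b] x ∈ f^[b - a] '' Y ∩ Y :=
    ⟨⟨f^[a] x, ha, by rw [← Function.iterate_add_apply]; congr 1; omega⟩, hb⟩
  rw [h (b - a) (by omega)] at hmem
  exact hmem

lemma codesOn_unique {M : Type*} {L : ℕ} {f : M → M} {Y : Fin L → Set M} {n : ℕ}
    {w : Fin n → Option (Fin L)} {x : M} (hx : CodesOn f Y Set.univ w x)
    {k : Fin L} (hk : Wandering f (Y k)) {a b : Fin n}
    (ha : w a = some k) (hb : w b = some k) : a = b := by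
  have h1 := hx a
  have h2 := hx b
  rw [ha] at h1; rw [hb] at h2
  exact Fin.ext (wandering_unique' hk h1.2 h2.2)

/-- for pairwise disjoint wandering sets that fail to be mutually singular
with bound M₀, the map w ↦ w′ replacing the unique occurrence of Y_i by ∞ sends
𝒜_n({i,j}) into 𝒜_n(ℱ, ℱ∖{Y_i}), is at most 2M₀-to-one, and consequently
#𝒜_n({i,j}) ≤ 2M₀ · #𝒜_n(ℱ, ℱ∖{Y_i}). -/
theorem pair_words_card_le {M : Type*} [MetricSpace M] [CompactSpace M] (f : M ≃ₜ M)
    {L : ℕ} (Y : Fin L → Set M)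
    (hdisj : Pairwise fun i j => Disjoint (Y i) (Y j))
    (hwand : ∀ i, Wandering ⇑f (Y i))
    (M₀ : ℕ)
    (hM₀ : ∀ x : M, ∀ i j : Fin L, i ≠ j → ∀ ni nj : ℕ,
      (⇑f)^[ni] x ∈ Y i → (⇑f)^[nj] x ∈ Y j → ni ≤ nj + M₀ ∧ nj ≤ ni + M₀)
    (i j : Fin L) (hij : i ≠ j) (n : ℕ) :
    (∀ w ∈ PairWords ⇑f Y M₀ i j n, replaceLetter i w ∈ WordsExact ⇑f Y ({i}ᶜ) n) ∧
    (∀ w' : Fin n → Option (Fin L),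
      Nat.card {w ∈ PairWords ⇑f Y M₀ i j n | replaceLetter i w = w'} ≤ 2 * M₀) ∧
    Nat.card (PairWords ⇑f Y M₀ i j n) ≤ 2 * M₀ * Nat.card (WordsExact ⇑f Y ({i}ᶜ) n) := by
  classical
  have part1 : ∀ w ∈ PairWords ⇑f Y M₀ i j n, replaceLetter i w ∈ WordsExact ⇑f Y ({i}ᶜ) n := by
    rintro w ⟨⟨⟨x, hx⟩, hlet⟩, -⟩
    refine ⟨⟨x, ?_⟩, ?_⟩
    · intro p
      by_cases hpi : w p = some i
      · have hYi : (⇑f)^[(p : ℕ)] x ∈ Y i := by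
          have := hx p; rw [hpi] at this; exact this.2
        unfold replaceLetter
        rw [if_pos hpi]
        show (⇑f)^[(p : ℕ)] x ∉ ⋃ k ∈ ({i}ᶜ : Set (Fin L)), Y k
        intro hmem
        rw [Set.mem_iUnion₂] at hmem
        obtain ⟨k, hk, hmemk⟩ := hmem
        exact Set.disjoint_left.mp (hdisj (Set.mem_compl_singleton_iff.mp hk)) hmemk hYi
      · unfold replaceLetter
        rw [if_neg hpi]
        have := hx p
        cases hwp : w p with
        | none =>
            rw [hwp] at this
            show (⇑f)^[(p : ℕ)] x ∉ ⋃ k ∈ ({i}ᶜ : Set (Fin L)), Y k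
            intro hmem
            rw [Set.mem_iUnion₂] at hmem
            obtain ⟨k, _, hmemk⟩ := hmem
            exact this (by rw [Set.mem_iUnion₂]; exact ⟨k, trivial, hmemk⟩)
        | some k =>
            rw [hwp] at this
            refine ⟨?_, this.2⟩
            rw [Set.mem_compl_singleton_iff]
            rintro rfl
            exact hpi hwp
    · ext k
      simp only [Set.mem_setOf_eq, Set.mem_compl_iff, Set.mem_singleton_iff]
      constructor
      · rintro ⟨p, hp⟩
        unfold replaceLetter at hp
        by_cases h : w p = some i
        · rw [if_pos h] at hp; exact absurd hp (by simp)
        · rw [if_neg h] at hp; rintro rfl; exact h hp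
      · intro hk
        have hmem : k ∈ {m : Fin L | ∃ p, w p = some m} := by rw [hlet]; trivial
        obtain ⟨p, hp⟩ := hmem
        refine ⟨p, ?_⟩
        unfold replaceLetter
        rw [if_neg (by rw [hp]; simpa using hk), hp]
  have key : ∀ w' : Fin n → Option (Fin L),
      Nat.card {w ∈ PairWords ⇑f Y M₀ i j n | replaceLetter i w = w'} ≤ 2 * M₀ := by
    intro w'
    set S : Set (Fin n → Option (Fin L)) :=
      {w ∈ PairWords ⇑f Y M₀ i j n | replaceLetter i w = w'} with hSdef
    rcases S.eq_empty_or_nonempty with hS | ⟨w₀, hw₀⟩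
    · simp [hS]
    · obtain ⟨⟨hwe₀, p₀, q₀, hp₀, hq₀, -, -⟩, hrep₀⟩ := hw₀
      have hw'q₀ : w' q₀ = some j := by
        rw [← hrep₀]
        unfold replaceLetter
        rw [if_neg (by rw [hq₀]; simpa using (Ne.symm hij)), hq₀]
      set T : Finset (Fin n) := Finset.univ.filter
        (fun p => (p : ℕ) ≤ (q₀ : ℕ) + M₀ ∧ (q₀ : ℕ) ≤ (p : ℕ) + M₀ ∧ p ≠ q₀) with hTdef
      have hT : T.card ≤ 2 * M₀ := by
        have hmaps : ∀ p ∈ T, (p : ℕ) ∈ (Finset.Icc ((q₀ : ℕ) - M₀) ((q₀ : ℕ) + M₀)).erase (q₀ : ℕ) := by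
          intro p hp
          simp only [hTdef, Finset.mem_filter, Finset.mem_univ, true_and] at hp
          simp only [Finset.mem_erase, Finset.mem_Icc]
          exact ⟨fun h => hp.2.2 (Fin.ext h), by omega, hp.1⟩
        have hinj : Set.InjOn (Fin.val) (↑T : Set (Fin n)) := fun a _ b _ h => Fin.ext h
        have hle := Finset.card_le_card_of_injOn _ hmaps hinj
        have hq₀mem : (q₀ : ℕ) ∈ Finset.Icc ((q₀ : ℕ) - M₀) ((q₀ : ℕ) + M₀) := by
          simp only [Finset.mem_Icc]; omega
        rw [Finset.card_erase_of_mem hq₀mem, Nat.card_Icc] at hle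
        omega
      have hstruct : ∀ w ∈ S, ∃ p ∈ T, w p = some i ∧ (∀ r, w r = some i → r = p) ∧
          ∀ r, r ≠ p → w r = w' r := by
        rintro w ⟨⟨⟨⟨x, hx⟩, hlet⟩, p, q, hp, hq, -, -⟩, hrep⟩
        have hwq₀ : w q₀ = some j := by
          by_cases h : w q₀ = some i
          · have h' : w' q₀ = none := by rw [← hrep]; unfold replaceLetter; rw [if_pos h]
            rw [hw'q₀] at h'
            exact absurd h' (by simp)
          · have h' : w' q₀ = w q₀ := by rw [← hrep]; unfold replaceLetter; rw [if_neg h]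
            rw [← h', hw'q₀]
        have hYi : (⇑f)^[(p : ℕ)] x ∈ Y i := by
          have := hx p; rw [hp] at this; exact this.2
        have hYj : (⇑f)^[(q₀ : ℕ)] x ∈ Y j := by
          have := hx q₀; rw [hwq₀] at this; exact this.2
        have hbound := hM₀ x i j hij (p : ℕ) (q₀ : ℕ) hYi hYj
        have hpq₀ : p ≠ q₀ := by
          rintro rfl
          rw [hp] at hwq₀
          exact hij (by simpa using hwq₀)
        refine ⟨p, ?_, hp, ?_, ?_⟩
        · simp only [hTdef, Finset.mem_filter, Finset.mem_univ, true_and]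
          exact ⟨hbound.1, hbound.2, hpq₀⟩
        · intro r hr
          exact codesOn_unique hx (hwand i) hr hp
        · intro r hr
          have hri : w r ≠ some i := fun h => hr (codesOn_unique hx (hwand i) h hp)
          rw [← hrep]
          unfold replaceLetter
          rw [if_neg hri]
      let g : (Fin n → Option (Fin L)) → Fin n := fun w =>
        if h : ∃ p : Fin n, w p = some i then h.choose else q₀
      have hgspec : ∀ w ∈ S, g w ∈ T ∧ w (g w) = some i ∧ ∀ r, r ≠ g w → w r = w' r := by
        intro w hw
        obtain ⟨p, hpT, hpi, huniq, hoff⟩ := hstruct w hw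
        have hex : ∃ p : Fin n, w p = some i := ⟨p, hpi⟩
        have hgw : g w = p := by
          have hch : w (hex.choose) = some i := hex.choose_spec
          simp only [g, dif_pos hex]
          exact huniq _ hch
        rw [hgw]
        exact ⟨hpT, hpi, hoff⟩
      have hinjS : Set.InjOn g S := by
        intro w₁ h₁ w₂ h₂ hgeq
        obtain ⟨hT₁, hi₁, hoff₁⟩ := hgspec w₁ h₁
        obtain ⟨hT₂, hi₂, hoff₂⟩ := hgspec w₂ h₂
        funext r
        by_cases hr : r = g w₁
        · rw [hr, hi₁, hgeq, hi₂]
        · rw [hoff₁ r hr, ← hoff₂ r (by rw [← hgeq]; exact hr)]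
      have hmapsS : ∀ w ∈ S, g w ∈ (T : Set (Fin n)) := fun w hw => (hgspec w hw).1
      calc Nat.card S = S.ncard := Nat.card_coe_set_eq S
        _ ≤ (T : Set (Fin n)).ncard :=
            Set.ncard_le_ncard_of_injOn g hmapsS hinjS T.finite_toSet
        _ = T.card := Set.ncard_coe_finset T
        _ ≤ 2 * M₀ := hT
  refine ⟨part1, key, ?_⟩
  have hfinA : (PairWords ⇑f Y M₀ i j n).Finite := Set.toFinite _
  have hfinB : (WordsExact ⇑f Y ({i}ᶜ) n).Finite := Set.toFinite _
  set A := hfinA.toFinset with hAdef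
  set B := hfinB.toFinset with hBdef
  have himage : A.image (replaceLetter i) ⊆ B := by
    intro w' hw'
    rw [Finset.mem_image] at hw'
    obtain ⟨w, hw, rfl⟩ := hw'
    rw [hAdef, Set.Finite.mem_toFinset] at hw
    rw [hBdef, Set.Finite.mem_toFinset]
    exact part1 w hw
  have hfib : ∀ w' ∈ A.image (replaceLetter i),
      (A.filter fun w => replaceLetter i w = w').card ≤ 2 * M₀ := by
    intro w' _
    have hk := key w'
    rw [Nat.card_coe_set_eq] at hk
    have hset : ↑(A.filter fun w => replaceLetter i w = w') =
        {w ∈ PairWords ⇑f Y M₀ i j n | replaceLetter i w = w'} := by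
      ext w
      simp only [Finset.coe_filter, Set.mem_setOf_eq, hAdef, Set.Finite.mem_toFinset,
        Set.mem_sep_iff]
    calc (A.filter fun w => replaceLetter i w = w').card
        = (↑(A.filter fun w => replaceLetter i w = w') :
            Set (Fin n → Option (Fin L))).ncard := (Set.ncard_coe_finset _).symm
      _ ≤ 2 * M₀ := by rw [hset]; exact hk
  have hmain := Finset.card_le_mul_card_image (f := replaceLetter i) A (2 * M₀) hfib
  have hAcard : Nat.card (PairWords ⇑f Y M₀ i j n) = A.card := by
    rw [Nat.card_coe_set_eq, ← Set.ncard_coe_finset A, hAdef, Set.Finite.coe_toFinset]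
  have hBcard : Nat.card (WordsExact ⇑f Y ({i}ᶜ) n) = B.card := by
    rw [Nat.card_coe_set_eq, ← Set.ncard_coe_finset B, hBdef, Set.Finite.coe_toFinset]
  rw [hAcard, hBcard]
  calc A.card ≤ 2 * M₀ * (A.image (replaceLetter i)).card := hmain
    _ ≤ 2 * M₀ * B.card := Nat.mul_le_mul_left _ (Finset.card_le_card himage)
end

section
/- Let f : M → M be a homeomorphism of a compact metric space whose non-wandering set is finite. Suppose ℱ = {Y₁,…,Y_L} is a finite family of subsets of M ∖ Ω(f) that is N-combinatorially complete for f. Then [c_{f,ℱ}(n)] = [n^L], provided ℱ consists of pairwise disjoint wandering sets. -/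
open Function Metric Set Topology Filter

variable {M : Type*}

/-- ℱ = {Y₀,…,Y_L} (L+1 sets) is N-combinatorially complete for f: there are k₁,…,k_L
such that for all transition times t i ≥ k i with N ∣ t i − k i there are points
x i ∈ Y i with x (i+1) = f^[t i] (x i). -/
def NCombComplete {M : Type*} {L : ℕ} (f : M → M) (Y : Fin (L + 1) → Set M) (N : ℕ) : Prop :=
  ∃ k : Fin L → ℕ, ∀ t : Fin L → ℕ,
    (∀ i, k i ≤ t i ∧ N ∣ t i - k i) →
    ∃ x : Fin (L + 1) → M, (∀ i, x i ∈ Y i) ∧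
      ∀ i : Fin L, x i.succ = f^[t i] (x i.castSucc)

section Aux
variable {M : Type*} {L : ℕ} {f : M → M} {Y : Fin (L + 1) → Set M}

lemma letter_unique_aux (hwand : ∀ i, Wandering f (Y i)) {n : ℕ}
    {w : Fin n → Option (Fin (L+1))} {x : M} (hw : Codes f Y w x)
    {j : Fin (L+1)} {a b : Fin n} (hab : (a:ℕ) < (b:ℕ))
    (ha : w a = some j) (hb : w b = some j) : False := by
  have hha := hw a; rw [ha] at hha
  have hhb := hw b; rw [hb] at hhb
  simp only [Option.elim] at hha hhb
  have h1 : f^[(b:ℕ) - (a:ℕ)] (f^[(a:ℕ)] x) = f^[(b:ℕ)] x := by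
    rw [← Function.iterate_add_apply]
    congr 1; omega
  have hmem : f^[(b:ℕ)] x ∈ f^[(b:ℕ)-(a:ℕ)] '' Y j ∩ Y j := ⟨⟨_, hha, h1⟩, hhb⟩
  rw [hwand j ((b:ℕ)-(a:ℕ)) (by omega)] at hmem
  exact hmem

lemma letter_unique (hwand : ∀ i, Wandering f (Y i)) {n : ℕ}
    {w : Fin n → Option (Fin (L+1))} {x : M} (hw : Codes f Y w x)
    {j : Fin (L+1)} {a b : Fin n}
    (ha : w a = some j) (hb : w b = some j) : a = b := by
  rcases lt_trichotomy (a:ℕ) (b:ℕ) with h | h | h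
  · exact (letter_unique_aux hwand hw h ha hb).elim
  · exact Fin.ext h
  · exact (letter_unique_aux hwand hw h hb ha).elim

lemma upper_bound (hwand : ∀ i, Wandering f (Y i)) (n : ℕ) :
    codingCount f Y n ≤ (n+1)^(L+1) := by
  classical
  set G : (Fin n → Option (Fin (L+1))) → Fin (L+1) → Option (Fin n) :=
    fun w j => if h : ∃ i, w i = some j then some h.choose else none with hG
  have step : ∀ (u : Fin n → Option (Fin (L+1))) (xu : M), Codes f Y u xu →
      ∀ (i : Fin n) (j : Fin (L+1)), u i = some j → G u j = some i := by
    intro u xu hu i j hij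
    have hex : ∃ i', u i' = some j := ⟨i, hij⟩
    have : hex.choose = i := letter_unique hwand hu hex.choose_spec hij
    simp only [hG, dif_pos hex, this]
  have back : ∀ (u : Fin n → Option (Fin (L+1))) (i : Fin n) (j : Fin (L+1)),
      G u j = some i → u i = some j := by
    intro u i j hgi
    by_cases h : ∃ i', u i' = some j
    · simp only [hG, dif_pos h] at hgi
      rw [← Option.some.inj hgi]; exact h.choose_spec
    · simp only [hG, dif_neg h] at hgi
      cases hgi
  have key : Function.Injective (fun (w : CodingWords f Y n) => G w.1) := by
    rintro ⟨w, x, hw⟩ ⟨w', x', hw'⟩ h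
    simp only at h
    apply Subtype.ext
    funext i
    show w i = w' i
    rcases hwi : w i with _ | j
    · rcases hwi' : w' i with _ | j
      · rfl
      · have := step w' x' hw' i j hwi'
        rw [← h] at this
        rw [back w i j this] at hwi; cases hwi
    · have := step w x hw i j hwi
      rw [h] at this
      rw [back w' i j this]
  calc codingCount f Y n ≤ Nat.card (Fin (L+1) → Option (Fin n)) :=
        Nat.card_le_card_of_injective _ key
    _ = (n+1)^(L+1) := by
        simp [Nat.card_eq_fintype_card, Fintype.card_fun]

end Aux

noncomputable def auxT {L m : ℕ} (N : ℕ) (k : Fin L → ℕ) (a : Fin (L+1) → Fin m) : ℕ → ℕ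
  | 0 => N * (a 0 : ℕ)
  | (j+1) => auxT N k a j +
      (if h : j < L then k ⟨j, h⟩ + N * ((a (Fin.succ ⟨j, h⟩)) : ℕ) else 0)

section Aux2
variable {M : Type*} {L : ℕ}

lemma coding_pos {f : M → M} {Y : Fin (L+1) → Set M} (x0 : M) (n : ℕ) :
    1 ≤ codingCount f Y n := by
  classical
  have h1 : (CodingWords f Y n).Nonempty := by
    refine ⟨fun i => if h : ∃ j, f^[(i:ℕ)] x0 ∈ Y j then some h.choose else none, x0, ?_⟩
    intro i
    by_cases h : ∃ j, f^[(i:ℕ)] x0 ∈ Y j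
    · simp only [dif_pos h, Option.elim]; exact h.choose_spec
    · simp only [dif_neg h, Option.elim]; simpa [Set.mem_iUnion] using h
  have h2 : Nonempty (CodingWords f Y n) := h1.to_subtype
  exact Nat.one_le_iff_ne_zero.mpr (Nat.card_ne_zero.mpr ⟨h2, inferInstance⟩)

lemma lower_bound (f g : M → M) (hfg : ∀ z, f (g z) = z) (Y : Fin (L+1) → Set M)
    (hdisj : Pairwise fun i j => Disjoint (Y i) (Y j))
    (hwand : ∀ i, Wandering f (Y i))
    {N : ℕ} (hN : 1 ≤ N) (k : Fin L → ℕ)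
    (hk : ∀ t : Fin L → ℕ, (∀ i, k i ≤ t i ∧ N ∣ t i - k i) →
        ∃ x : Fin (L + 1) → M, (∀ i, x i ∈ Y i) ∧
          ∀ i : Fin L, x i.succ = f^[t i] (x i.castSucc))
    {n m : ℕ} (hm : 1 ≤ m)
    (hbound : N * (m-1) + L * ((∑ j, k j) + N * (m-1)) < n) :
    m ^ (L+1) ≤ codingCount f Y n := by
  classical
  set t : (Fin (L+1) → Fin m) → Fin L → ℕ := fun a i => k i + N * (a i.succ : ℕ) with ht
  have htvalid : ∀ a, ∀ i, k i ≤ t a i ∧ N ∣ t a i - k i := by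
    intro a i
    exact ⟨Nat.le_add_right _ _, by simp [ht]⟩
  have hx := fun a => (hk (t a) (htvalid a))
  set x : (Fin (L+1) → Fin m) → Fin (L+1) → M := fun a => (hx a).choose with hxdef
  have hxY : ∀ a i, x a i ∈ Y i := fun a => (hx a).choose_spec.1
  have hxit : ∀ a (i : Fin L), x a i.succ = f^[t a i] (x a i.castSucc) :=
    fun a => (hx a).choose_spec.2
  set y : (Fin (L+1) → Fin m) → M := fun a => (g)^[N * (a 0 : ℕ)] (x a 0) with hy
  have hmono : ∀ a : Fin (L+1) → Fin m, Monotone (auxT N k a) := by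
    intro a
    apply monotone_nat_of_le_succ
    intro j
    simp only [auxT]
    exact Nat.le_add_right _ _
  have hbound' : ∀ (a : Fin (L+1) → Fin m) (j : ℕ), auxT N k a j ≤ N*(m-1) + j * ((∑ i, k i) + N*(m-1)) := by
    intro a j
    have hav : ∀ i, (a i : ℕ) ≤ m - 1 := by
      intro i; have := (a i).isLt; omega
    induction j with
    | zero =>
      simp only [auxT, Nat.zero_mul, Nat.add_zero]
      exact Nat.mul_le_mul_left _ (hav 0)
    | succ j ih =>
      simp only [auxT]
      have htt : (if h : j < L then k ⟨j, h⟩ + N * ((a (Fin.succ ⟨j, h⟩)) : ℕ) else 0)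
          ≤ (∑ i, k i) + N*(m-1) := by
        split_ifs with h
        · exact Nat.add_le_add
            (Finset.single_le_sum (fun i _ => Nat.zero_le _) (Finset.mem_univ (⟨j, h⟩ : Fin L)))
            (Nat.mul_le_mul_left _ (hav _))
        · exact Nat.zero_le _
      calc auxT N k a j + _ ≤ (N*(m-1) + j * ((∑ i, k i) + N*(m-1))) + ((∑ i, k i) + N*(m-1)) :=
            Nat.add_le_add ih htt
        _ = N*(m-1) + (j+1) * ((∑ i, k i) + N*(m-1)) := by rw [Nat.succ_mul, add_assoc]
  have horb : ∀ (a : Fin (L+1) → Fin m) (i : Fin (L+1)), f^[auxT N k a (i:ℕ)] (y a) = x a i := by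
    intro a
    have hinv : ∀ (q : ℕ) (z : M), f^[q] ((g)^[q] z) = z := fun q z =>
      Function.LeftInverse.iterate hfg q z
    intro i
    induction i using Fin.induction with
    | zero =>
      simpa [auxT, hy] using hinv (N * (a 0 : ℕ)) (x a 0)
    | succ i ih =>
      have hval : ((i.succ : Fin (L+1)) : ℕ) = (i : ℕ) + 1 := rfl
      rw [hval]
      simp only [auxT, dif_pos i.isLt, Fin.eta]
      rw [add_comm, Function.iterate_add_apply]
      have hcs : ((i.castSucc : Fin (L+1)) : ℕ) = (i : ℕ) := rfl
      rw [hcs] at ih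
      rw [ih, ← hxit a i]
  have hTn : ∀ (a : Fin (L+1) → Fin m) (i : Fin (L+1)), auxT N k a (i : ℕ) < n := by
    intro a i
    calc auxT N k a (i:ℕ) ≤ auxT N k a L := hmono a (by omega : (i:ℕ) ≤ L)
      _ ≤ N*(m-1) + L * ((∑ i, k i) + N*(m-1)) := hbound' a L
      _ < n := hbound
  set w : (Fin (L+1) → Fin m) → Fin n → Option (Fin (L+1)) := fun a i =>
    if h : ∃ j, f^[(i:ℕ)] (y a) ∈ Y j then some h.choose else none with hwdef
  have hcodes : ∀ a, Codes f Y (w a) (y a) := by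
    intro a i
    by_cases h : ∃ j, f^[(i:ℕ)] (y a) ∈ Y j
    · simp only [hwdef, dif_pos h, Option.elim]
      exact h.choose_spec
    · simp only [hwdef, dif_neg h, Option.elim]
      simpa [Set.mem_iUnion] using h
  have hpos : ∀ (a : Fin (L+1) → Fin m) (i : Fin (L+1)), w a ⟨auxT N k a (i:ℕ), hTn a i⟩ = some i := by
    intro a i
    have hmem : f^[auxT N k a (i:ℕ)] (y a) ∈ Y i := by
      rw [horb a i]; exact hxY a i
    have hex : ∃ j, f^[auxT N k a (i:ℕ)] (y a) ∈ Y j := ⟨i, hmem⟩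
    have hch : hex.choose = i := by
      by_contra hne
      exact Set.disjoint_left.mp (hdisj hne) hex.choose_spec hmem
    simp only [hwdef, dif_pos hex, hch]
  have hinj : Function.Injective
      (fun a => (⟨w a, y a, hcodes a⟩ : CodingWords f Y n)) := by
    intro a a' h
    have hww : w a = w a' := congrArg Subtype.val h
    have hTeq : ∀ i : Fin (L+1), auxT N k a (i:ℕ) = auxT N k a' (i:ℕ) := by
      intro i
      have p1 := hpos a i
      have p2 := hpos a' i
      rw [← hww] at p2
      have heq := letter_unique hwand (hcodes a) p1 p2
      exact congrArg Fin.val heq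
    funext i
    refine Fin.cases ?_ ?_ i
    · have h0 := hTeq 0
      simp only [Fin.val_zero, auxT] at h0
      exact Fin.ext (Nat.eq_of_mul_eq_mul_left (by omega) h0)
    · intro i
      have h1 := hTeq i.castSucc
      have h2 := hTeq i.succ
      simp only [Fin.coe_castSucc, Fin.val_succ, auxT, dif_pos i.isLt, Fin.eta] at h1 h2
      rw [h1] at h2
      have h3 := Nat.add_left_cancel h2
      have h4 := Nat.add_left_cancel h3
      exact Fin.ext (Nat.eq_of_mul_eq_mul_left (by omega) h4)
  calc m ^ (L+1) = Nat.card (Fin (L+1) → Fin m) := by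
        simp [Nat.card_eq_fintype_card]
    _ ≤ Nat.card (CodingWords f Y n) := Nat.card_le_card_of_injective _ hinj
    _ = codingCount f Y n := rfl

end Aux2

/-- for a homeomorphism of a compact metric space with finite non-wandering
set and an N-combinatorially complete family of L+1 pairwise disjoint wandering subsets of
M ∖ Ω(f), one has [c_{f,ℱ}(n)] = [n^(L+1)] (family of size L+1, exponent L+1). -/
theorem comb_complete_coding_growth {M : Type*} [MetricSpace M] [CompactSpace M] (f : M ≃ₜ M)
    (hΩfin : (NonwanderingSet ⇑f).Finite)
    {L : ℕ} (Y : Fin (L + 1) → Set M)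
    (hsub : ∀ i, Y i ⊆ (NonwanderingSet ⇑f)ᶜ)
    (hdisj : Pairwise fun i j => Disjoint (Y i) (Y j))
    (hwand : ∀ i, Wandering ⇑f (Y i))
    (N : ℕ) (hN : 1 ≤ N) (hcc : NCombComplete ⇑f Y N) :
    ∃ c₁ c₂ : ℝ, 0 < c₁ ∧ 0 < c₂ ∧ ∀ n : ℕ, 1 ≤ n →
      c₁ * (n : ℝ) ^ (L + 1) ≤ (codingCount ⇑f Y n : ℝ) ∧
      (codingCount ⇑f Y n : ℝ) ≤ c₂ * (n : ℝ) ^ (L + 1) := by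

  classical
  obtain ⟨k, hk⟩ := hcc
  obtain ⟨xpt, hxpt⟩ := hk k (fun i => ⟨le_refl _, by simp⟩)
  set S : ℕ := ∑ i, k i with hS
  set C : ℕ := (L+1)*N + L*S + 1 with hC
  have hCpos : 0 < C := by omega
  have hlow : ∀ n : ℕ, C ≤ n → (n / C)^(L+1) ≤ codingCount ⇑f Y n := by
    intro n hn
    have hm : 1 ≤ n / C := (Nat.one_le_div_iff hCpos).mpr hn
    apply lower_bound ⇑f ⇑f.symm f.apply_symm_apply Y hdisj hwand hN k hk hm
    have h1 : C * (n / C) ≤ n := Nat.mul_div_le n C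
    obtain ⟨p, hp⟩ : ∃ p, n / C = p + 1 := ⟨n / C - 1, by omega⟩
    have h2 : N * (n/C - 1) + L * (S + N * (n/C - 1)) < C * (n / C) := by
      rw [hp, hC]
      simp only [Nat.add_sub_cancel]
      have e2 : N*p + L*(S+N*p) = (L+1)*(N*p) + L*S := by ring
      have e3 : ((L+1)*N + L*S + 1)*(p+1)
          = ((L+1)*(N*p) + L*S) + ((L+1)*N + L*(S*p) + p + 1) := by ring
      rw [e2, e3]
      exact Nat.lt_add_of_pos_right (Nat.succ_pos _)
    calc N * (n/C - 1) + L * ((∑ j, k j) + N * (n/C - 1)) < C * (n / C) := by rw [← hS]; exact h2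
      _ ≤ n := h1
  refine ⟨(1/(2*(C:ℝ)))^(L+1), 2^(L+1), by positivity, by positivity, ?_⟩
  intro n hn
  have hCr : (0:ℝ) < 2*(C:ℝ) := by positivity
  constructor
  · have hrw : (1/(2*(C:ℝ)))^(L+1) * (n:ℝ)^(L+1) = ((n:ℝ)/(2*(C:ℝ)))^(L+1) := by
      rw [div_pow, div_pow, one_pow]
      ring
    rw [hrw]
    by_cases hcase : 2*C ≤ n
    · have h1 := hlow n (by omega)
      have hm : 1 ≤ n / C := (Nat.one_le_div_iff hCpos).mpr (by omega)
      have h2 : n ≤ 2*(C*(n/C)) := by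
        have hmod := Nat.div_add_mod n C
        have h3 : n % C < C := Nat.mod_lt _ hCpos
        have h4 : C * 1 ≤ C * (n/C) := Nat.mul_le_mul_left C hm
        omega
      have h5 : (n:ℝ)/(2*(C:ℝ)) ≤ ((n/C : ℕ) : ℝ) := by
        rw [div_le_iff₀ hCr]
        have : ((n:ℕ):ℝ) ≤ ((2*(C*(n/C)) : ℕ) : ℝ) := by exact_mod_cast h2
        push_cast at this ⊢
        linarith
      calc ((n:ℝ)/(2*(C:ℝ)))^(L+1) ≤ (((n/C : ℕ) : ℝ))^(L+1) :=
            pow_le_pow_left₀ (by positivity) h5 _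
        _ ≤ (codingCount ⇑f Y n : ℝ) := by exact_mod_cast h1
    · have h1 : 1 ≤ codingCount ⇑f Y n := coding_pos (xpt 0) n
      have h5 : (n:ℝ)/(2*(C:ℝ)) ≤ 1 := by
        rw [div_le_one hCr]
        have : (n:ℕ) ≤ 2*C := by omega
        exact_mod_cast this
      calc ((n:ℝ)/(2*(C:ℝ)))^(L+1) ≤ 1 := pow_le_one₀ (by positivity) h5
        _ ≤ (codingCount ⇑f Y n : ℝ) := by exact_mod_cast h1
  · have h1 := upper_bound hwand n (f := ⇑f) (Y := Y)
    have h2 : ((n:ℝ)+1) ≤ 2*(n:ℝ) := by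
      have : (1:ℝ) ≤ (n:ℝ) := by exact_mod_cast hn
      linarith
    calc (codingCount ⇑f Y n : ℝ) ≤ ((n:ℝ)+1)^(L+1) := by exact_mod_cast h1
      _ ≤ (2*(n:ℝ))^(L+1) := pow_le_pow_left₀ (by positivity) h2 _
      _ = 2^(L+1) * (n:ℝ)^(L+1) := mul_pow _ _ _
end
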